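/- Let n ≥ 1 be an integer, ε = (ε_1, …, ε_n) ∈ {±1}^n, and let A be an n×n real SSR(ε) matrix. Then there exists a row vector r ∈ ℝ^n such that the (n+1)×n matrix obtained by adjoining r as a new first row above the top border of A is SSR(ε). -/

import Mathlib

open Filter Topology

lemma my_det_updateRow_sum {k : ℕ} (M : Matrix (Fin k) (Fin k) ℝ) (i0 : Fin k)
    {ι : Type*} [Fintype ι] (c : ι → ℝ) (v : ι → Fin k → ℝ) :
    (M.updateRow i0 (∑ j, c j • v j)).det = ∑ j, c j * (M.updateRow i0 (v j)).det := by
  classical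
  suffices H : ∀ s : Finset ι, (M.updateRow i0 (∑ j ∈ s, c j • v j)).det
      = ∑ j ∈ s, c j * (M.updateRow i0 (v j)).det from H Finset.univ
  intro s
  induction s using Finset.induction_on with
  | empty =>
      simp only [Finset.sum_empty]
      exact Matrix.det_eq_zero_of_row_eq_zero i0 (by simp)
  | insert a s h ih =>
      rw [Finset.sum_insert h, Matrix.det_updateRow_add, Matrix.det_updateRow_smul, ih,
        Finset.sum_insert h]

/-- `A` is strictly sign regular of order `p` with sign pattern `ε` (`SSR_p(ε)`):
for every `k ∈ {1, …, p}` (here `k = kk.val + 1` for `kk : Fin p`), every `k × k` minor of `A`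
(the determinant of the submatrix on any `k` rows and `k` columns taken in increasing order)
has sign `ε k`, i.e. `ε k` times the minor is strictly positive. -/
def IsSSRp (p : ℕ) {m n : ℕ} (A : Matrix (Fin m) (Fin n) ℝ) (ε : Fin p → ℝ) : Prop :=
  ∀ (kk : Fin p) (r : Fin (kk.val + 1) → Fin m) (c : Fin (kk.val + 1) → Fin n),
    StrictMono r → StrictMono c → 0 < ε kk * (A.submatrix r c).det

set_option maxHeartbeats 1600000 in
theorem stmt_4 (n : ℕ) (hn : 1 ≤ n) (ε : Fin n → ℝ) (hε : ∀ i, ε i = 1 ∨ ε i = -1)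
    (A : Matrix (Fin n) (Fin n) ℝ) (hA : IsSSRp n A ε) :
    ∃ r : Fin n → ℝ,
      IsSSRp n ((Matrix.of (Fin.cons r (fun i => A i))) : Matrix (Fin (n + 1)) (Fin n) ℝ) ε := by
  classical
  have hmain : ∀ᶠ δ in nhdsWithin (0:ℝ) (Set.Ioi 0),
      IsSSRp n ((Matrix.of (Fin.cons (fun c => ∑ j : Fin n, (-δ) ^ (j:ℕ) * A j c)
        (fun i => A i))) : Matrix (Fin (n + 1)) (Fin n) ℝ) ε := by
    unfold IsSSRp
    rw [Filter.eventually_all]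
    intro kk
    rw [Filter.eventually_all]
    intro rr
    rw [Filter.eventually_all]
    intro cc
    by_cases hr : StrictMono rr
    case neg => exact Filter.Eventually.of_forall fun δ h _ => absurd h hr
    by_cases hc : StrictMono cc
    case neg => exact Filter.Eventually.of_forall fun δ _ h => absurd h hc
    suffices h : ∀ᶠ δ in nhdsWithin (0:ℝ) (Set.Ioi 0),
        0 < ε kk * (((Matrix.of (Fin.cons (fun c => ∑ j : Fin n, (-δ) ^ (j:ℕ) * A j c)
          (fun i => A i))) : Matrix (Fin (n + 1)) (Fin n) ℝ).submatrix rr cc).det by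
      exact h.mono fun δ hδ _ _ => hδ
    by_cases hz : rr 0 = 0
    case neg =>
      -- the new row is not used: the minor is a minor of A, independent of δ
      apply Filter.Eventually.of_forall
      intro δ
      have hne : ∀ i, 1 ≤ (rr i).val := by
        intro i
        rcases Nat.eq_zero_or_pos i.val with h | h
        · have hi0 : i = 0 := Fin.ext h
          subst hi0
          have : (rr 0).val ≠ 0 := fun hcon => hz (Fin.ext hcon)
          omega
        · have h0i : (0 : Fin (kk.val + 1)) < i := by
            rw [Fin.lt_def]; simpa using h
          have := Fin.lt_def.mp (hr h0i)
          omega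
      set rr' : Fin (kk.val + 1) → Fin n := fun i =>
        ⟨(rr i).val - 1, by have := (rr i).isLt; have := hne i; omega⟩ with hrr'
      have hr' : StrictMono rr' := by
        intro a b hab
        have h1 := Fin.lt_def.mp (hr hab)
        have h2 := hne a
        rw [Fin.lt_def]
        simp only [hrr']
        omega
      have heq : (((Matrix.of (Fin.cons (fun c => ∑ j : Fin n, (-δ) ^ (j:ℕ) * A j c)
          (fun i => A i))) : Matrix (Fin (n + 1)) (Fin n) ℝ).submatrix rr cc)
          = A.submatrix rr' cc := by
        ext i c
        have hsucc : rr i = Fin.succ (rr' i) := by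
          apply Fin.ext
          simp only [Fin.val_succ, hrr']
          have := hne i
          omega
        simp only [Matrix.submatrix_apply, Matrix.of_apply, hsucc, Fin.cons_succ]
      rw [heq]
      exact hA kk rr' cc hr' hc
    case pos =>
      -- the new row is used
      have hone : ∀ i : Fin kk.val, 1 ≤ (rr i.succ).val := by
        intro i
        have h0i : (0 : Fin (kk.val + 1)) < i.succ := by
          rw [Fin.lt_def]; simp
        have := Fin.lt_def.mp (hr h0i)
        rw [hz] at this
        have h00 : ((0 : Fin (n + 1)) : ℕ) = 0 := rfl
        omega
      set tail : Fin kk.val → Fin n := fun i =>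
        ⟨(rr i.succ).val - 1, by have := (rr i.succ).isLt; have := hone i; omega⟩ with htail
      set ρ : Fin n → (Fin (kk.val + 1) → Fin n) := fun j => Fin.cons j tail with hρ
      set d : Fin n → ℝ := fun j => (A.submatrix (ρ j) cc).det with hd
      have hPex : ∃ m : ℕ, ∀ i : Fin kk.val, (rr i.succ).val ≠ m + 1 :=
        ⟨n, fun i => by have := (rr i.succ).isLt; omega⟩
      set j0 : ℕ := Nat.find hPex with hj0
      have hP : ∀ i : Fin kk.val, (rr i.succ).val ≠ j0 + 1 := Nat.find_spec hPex
      -- i ≤ rr i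
      have hle : ∀ (m : ℕ) (hm : m < kk.val + 1), m ≤ (rr ⟨m, hm⟩).val := by
        intro m
        induction m with
        | zero => intro hm; omega
        | succ p ih =>
            intro hm
            have hp : p < kk.val + 1 := by omega
            have hlt : (⟨p, hp⟩ : Fin (kk.val + 1)) < ⟨p + 1, hm⟩ := by
              rw [Fin.lt_def]; simp
            have := Fin.lt_def.mp (hr hlt)
            have := ih hp
            omega
      -- rr m = m for m ≤ j0
      have claim : ∀ (m : ℕ) (hm : m < kk.val + 1), m ≤ j0 → (rr ⟨m, hm⟩).val = m := by
        intro m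
        induction m using Nat.strong_induction_on with
        | _ m ih =>
          intro hm hmj
          rcases Nat.eq_zero_or_pos m with h0 | h0
          · subst h0
            have : (⟨0, hm⟩ : Fin (kk.val + 1)) = 0 := rfl
            rw [this, hz]
            rfl
          · by_contra hne
            have hgt : m < (rr ⟨m, hm⟩).val := lt_of_le_of_ne (hle m hm) (Ne.symm hne)
            have hPm : ∀ i : Fin kk.val, (rr i.succ).val ≠ (m - 1) + 1 := by
              intro i
              have hiv : i.succ.val = i.val + 1 := rfl
              rcases lt_trichotomy i.succ.val m with h | h | h
              · have hlt2 : i.succ.val < kk.val + 1 := i.succ.isLt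
                have := ih i.succ.val h hlt2 (by omega)
                have heta : (⟨i.succ.val, hlt2⟩ : Fin (kk.val + 1)) = i.succ := rfl
                rw [heta] at this
                omega
              · have heqf : i.succ = (⟨m, hm⟩ : Fin (kk.val + 1)) := Fin.ext h
                rw [heqf]
                omega
              · have hlt3 : (⟨m, hm⟩ : Fin (kk.val + 1)) < i.succ := by
                  rw [Fin.lt_def]; simpa using h
                have := Fin.lt_def.mp (hr hlt3)
                omega
            have h5 : Nat.find hPex ≤ m - 1 := Nat.find_le hPm
            omega
      have hj0k : j0 < kk.val + 1 := by
        by_contra hcon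
        push_neg at hcon
        have hPk : ∀ i : Fin kk.val, (rr i.succ).val ≠ kk.val + 1 := by
          intro i
          have hlt2 : i.succ.val < kk.val + 1 := i.succ.isLt
          have := claim i.succ.val hlt2 (by omega)
          have heta : (⟨i.succ.val, hlt2⟩ : Fin (kk.val + 1)) = i.succ := rfl
          rw [heta] at this
          omega
        have h5 : Nat.find hPex ≤ kk.val := Nat.find_le hPk
        omega
      have hj0n : j0 < n := by have := kk.isLt; omega
      -- rows above j0 map strictly above j0+1
      have hbig : ∀ i : Fin (kk.val + 1), j0 < i.val → j0 + 2 ≤ (rr i).val := by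
        intro i h
        have hi1 : 1 ≤ i.val := by omega
        set i' : Fin kk.val := ⟨i.val - 1, by have := i.isLt; omega⟩ with hi'
        have hsucc : i'.succ = i := by
          apply Fin.ext; simp [hi']; omega
        have h1 : i.val ≤ (rr i).val := by
          have := hle i.val i.isLt
          have heta : (⟨i.val, i.isLt⟩ : Fin (kk.val + 1)) = i := rfl
          rwa [heta] at this
        have h2 := hP i'
        rw [hsucc] at h2
        omega
      have hconsv : ∀ (j : Fin n) (i : Fin (kk.val + 1)) (h0 : 0 < i.val)
          (hlt : i.val - 1 < kk.val), ρ j i = tail ⟨i.val - 1, hlt⟩ := by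
        intro j i h0 hlt
        have hsucc : i = Fin.succ ⟨i.val - 1, hlt⟩ := by
          apply Fin.ext; simp [Fin.val_succ]; omega
        conv_lhs => rw [hsucc]
        simp only [hρ, Fin.cons_succ]
      -- d j = 0 for j < j0
      have fact1 : ∀ j : Fin n, j.val < j0 → d j = 0 := by
        intro j hj
        have hjk : j.val < kk.val := by omega
        apply Matrix.det_zero_of_row_eq (i := (0 : Fin (kk.val + 1)))
          (j := Fin.succ ⟨j.val, hjk⟩)
        · exact (Fin.succ_ne_zero _).symm
        · ext c
          simp only [Matrix.submatrix_apply, hρ, Fin.cons_zero, Fin.cons_succ]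
          have hc2 : j.val + 1 < kk.val + 1 := by omega
          have heta : (Fin.succ (⟨j.val, hjk⟩ : Fin kk.val))
              = (⟨j.val + 1, hc2⟩ : Fin (kk.val + 1)) := rfl
          have hval : (rr (Fin.succ (⟨j.val, hjk⟩ : Fin kk.val))).val = j.val + 1 := by
            rw [heta]; exact claim (j.val + 1) hc2 (by omega)
          have htj : tail ⟨j.val, hjk⟩ = j := by
            apply Fin.ext
            simp only [htail]
            omega
          rw [htj]
      -- the sorted row selection
      set ρs : Fin (kk.val + 1) → Fin n := fun i =>
        if i.val ≤ j0 then ⟨i.val, by omega⟩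
        else ⟨(rr i).val - 1, by have := (rr i).isLt; omega⟩ with hρs
      have hρsmono : StrictMono ρs := by
        intro a b hab
        have habv := Fin.lt_def.mp hab
        rw [Fin.lt_def]
        simp only [hρs]
        split_ifs with h1 h2 h2
        · simpa using habv
        · have := hbig b (by omega)
          simp; omega
        · omega
        · have := Fin.lt_def.mp (hr hab)
          have := hbig a (by omega)
          simp; omega
      set c0 : Fin (kk.val + 1) := ⟨j0, hj0k⟩ with hc0
      set σ : Equiv.Perm (Fin (kk.val + 1)) := Fin.cycleRange c0 with hσ
      have hcomp : ∀ i, ρ (⟨j0, hj0n⟩ : Fin n) i = ρs (σ⁻¹ i) := by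
        intro i
        rcases Nat.eq_zero_or_pos i.val with h0 | h0
        · have hi0 : i = 0 := Fin.ext h0
          subst hi0
          have hσ0 : σ⁻¹ 0 = c0 := by
            rw [Equiv.Perm.inv_eq_iff_eq]
            exact (Fin.cycleRange_self c0).symm
          rw [hσ0]
          simp only [hρ, Fin.cons_zero, hρs]
          rw [if_pos (le_refl j0)]
        · by_cases hij : i.val ≤ j0
          · -- 1 ≤ i ≤ j0 : σ⁻¹ i = i - 1
            set ip : Fin (kk.val + 1) := ⟨i.val - 1, by omega⟩ with hip
            have hσi : σ⁻¹ i = ip := by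
              rw [Equiv.Perm.inv_eq_iff_eq]
              have hlt : ip < c0 := by rw [Fin.lt_def]; simp [hip, hc0]; omega
              rw [hσ, Fin.cycleRange_of_lt hlt]
              apply Fin.ext
              rw [Fin.val_add_one_of_lt]
              · simp [hip]; omega
              · rw [Fin.lt_def]
                simp [hip, Fin.last]
                have := hj0k; omega
            rw [hσi]
            have hρsip : ρs ip = ⟨i.val - 1, by omega⟩ := by
              simp only [hρs, hip]
              rw [if_pos (by simp; omega)]
            rw [hρsip]
            have hltk : i.val - 1 < kk.val := by have := i.isLt; omega
            rw [hconsv _ i h0 hltk]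
            apply Fin.ext
            simp only [htail]
            have hsu : (⟨i.val - 1, hltk⟩ : Fin kk.val).succ
                = (⟨i.val, i.isLt⟩ : Fin (kk.val + 1)) := by
              apply Fin.ext; simp [Fin.val_succ]; omega
            rw [hsu]
            have := claim i.val i.isLt hij
            omega
          · -- i > j0 : σ⁻¹ i = i
            push_neg at hij
            have hσi : σ⁻¹ i = i := by
              rw [Equiv.Perm.inv_eq_iff_eq]
              rw [hσ, Fin.cycleRange_of_gt]
              rw [Fin.lt_def]; simp [hc0]; omega
            rw [hσi]
            have hρsi : ρs i = ⟨(rr i).val - 1, by have := (rr i).isLt; omega⟩ := by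
              simp only [hρs]
              rw [if_neg (by omega)]
            rw [hρsi]
            have hltk : i.val - 1 < kk.val := by have := i.isLt; omega
            rw [hconsv _ i (by omega) hltk]
            apply Fin.ext
            simp only [htail]
            have hsu : (⟨i.val - 1, hltk⟩ : Fin kk.val).succ = i := by
              apply Fin.ext; simp [Fin.val_succ]; omega
            rw [hsu]
      -- fact 2 : sign of the pivot minor
      have fact2 : 0 < ε kk * ((-1 : ℝ) ^ j0 * d ⟨j0, hj0n⟩) := by
        have h1 := hA kk ρs cc hρsmono hc
        have h2 : d ⟨j0, hj0n⟩ = (-1 : ℝ) ^ j0 * (A.submatrix ρs cc).det := by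
          have hmx : A.submatrix (ρ ⟨j0, hj0n⟩) cc
              = (A.submatrix ρs cc).submatrix (⇑(σ⁻¹)) id := by
            ext i c
            simp only [Matrix.submatrix_apply, hcomp i, id]
          calc d ⟨j0, hj0n⟩ = (A.submatrix (ρ ⟨j0, hj0n⟩) cc).det := rfl
            _ = ((A.submatrix ρs cc).submatrix (⇑(σ⁻¹)) id).det := by rw [hmx]
            _ = ((Equiv.Perm.sign σ⁻¹ : ℤ) : ℝ) * (A.submatrix ρs cc).det :=
                Matrix.det_permute σ⁻¹ _
            _ = (-1 : ℝ) ^ j0 * (A.submatrix ρs cc).det := by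
                congr 1
                rw [map_inv, hσ, hc0, Fin.sign_cycleRange]
                push_cast
                simp
        rw [h2]
        have h3 : ((-1 : ℝ) ^ j0) * ((-1 : ℝ) ^ j0) = 1 := by
          rw [← pow_add, ← two_mul, pow_mul]
          norm_num
        calc 0 < ε kk * (A.submatrix ρs cc).det := h1
          _ = ε kk * ((-1:ℝ)^j0 * ((-1:ℝ)^j0 * (A.submatrix ρs cc).det)) := by
              rw [← mul_assoc ((-1:ℝ)^j0), h3, one_mul]
      -- determinant expansion
      have hdetsum : ∀ δ : ℝ,
          (((Matrix.of (Fin.cons (fun c => ∑ j : Fin n, (-δ) ^ (j:ℕ) * A j c)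
            (fun i => A i))) : Matrix (Fin (n + 1)) (Fin n) ℝ).submatrix rr cc).det
          = ∑ j : Fin n, (-δ) ^ (j:ℕ) * d j := by
        intro δ
        have hM : (((Matrix.of (Fin.cons (fun c => ∑ j : Fin n, (-δ) ^ (j:ℕ) * A j c)
            (fun i => A i))) : Matrix (Fin (n + 1)) (Fin n) ℝ).submatrix rr cc)
            = Matrix.updateRow (A.submatrix (ρ ⟨0, by omega⟩) cc) 0
              (∑ j : Fin n, (-δ) ^ (j:ℕ) • (fun c => A j (cc c))) := by
          ext i c
          refine Fin.cases ?_ ?_ i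
          · rw [Matrix.updateRow_self]
            simp only [Matrix.submatrix_apply, Matrix.of_apply, hz, Fin.cons_zero]
            rw [Finset.sum_apply]
            simp [smul_eq_mul]
          · intro i
            rw [Matrix.updateRow_ne (Fin.succ_ne_zero i)]
            have hsucc : rr i.succ = Fin.succ (tail i) := by
              apply Fin.ext
              simp only [Fin.val_succ, htail]
              have := hone i
              omega
            simp only [Matrix.submatrix_apply, Matrix.of_apply, hsucc, Fin.cons_succ, hρ]
        rw [hM, my_det_updateRow_sum]
        apply Finset.sum_congr rfl
        intro j _
        congr 1
        rw [hd]
        congr 1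
        ext i c
        refine Fin.cases ?_ ?_ i
        · rw [Matrix.updateRow_self]
          simp [hρ]
        · intro i
          rw [Matrix.updateRow_ne (Fin.succ_ne_zero i)]
          simp [hρ]
      -- the auxiliary polynomial
      set g : ℝ → ℝ := fun δ =>
        ∑ j : Fin n, (-1 : ℝ) ^ (j:ℕ) * δ ^ ((j:ℕ) - j0) * (ε kk * d j) with hg
      have hgcont : Continuous g := by
        apply continuous_finset_sum
        intro j _
        fun_prop
      have hg0 : 0 < g 0 := by
        have hgval : g 0 = (-1 : ℝ) ^ j0 * (ε kk * d ⟨j0, hj0n⟩) := by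
          simp only [hg]
          rw [Finset.sum_eq_single (⟨j0, hj0n⟩ : Fin n)]
          · simp
          · intro j _ hjne
            rcases lt_trichotomy (j : ℕ) j0 with h | h | h
            · rw [fact1 j h]; ring
            · exact absurd (Fin.ext h) hjne
            · rw [zero_pow (by omega)]; ring
          · simp
        rw [hgval]
        calc (0:ℝ) < ε kk * ((-1 : ℝ) ^ j0 * d ⟨j0, hj0n⟩) := fact2
          _ = (-1 : ℝ) ^ j0 * (ε kk * d ⟨j0, hj0n⟩) := by ring
      have heq : ∀ δ : ℝ,
          ε kk * (((Matrix.of (Fin.cons (fun c => ∑ j : Fin n, (-δ) ^ (j:ℕ) * A j c)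
            (fun i => A i))) : Matrix (Fin (n + 1)) (Fin n) ℝ).submatrix rr cc).det
          = δ ^ j0 * g δ := by
        intro δ
        rw [hdetsum δ]
        simp only [hg]
        rw [Finset.mul_sum, Finset.mul_sum]
        apply Finset.sum_congr rfl
        intro j _
        rcases lt_or_ge (j : ℕ) j0 with h | h
        · rw [fact1 j h]; ring
        · have hps : δ ^ j0 * δ ^ ((j:ℕ) - j0) = δ ^ (j:ℕ) := by
            rw [← pow_add]; congr 1; omega
          rw [neg_pow]
          linear_combination (-((-1:ℝ) ^ (j:ℕ) * ε kk * d j)) * hps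
      have hev : ∀ᶠ δ in 𝓝 (0:ℝ), 0 < g δ :=
        (hgcont.continuousAt (x := 0)).eventually (eventually_gt_nhds hg0)
      have hev2 : ∀ᶠ δ in nhdsWithin (0:ℝ) (Set.Ioi 0), 0 < g δ :=
        hev.filter_mono nhdsWithin_le_nhds
      have hmem : ∀ᶠ δ in nhdsWithin (0:ℝ) (Set.Ioi 0), δ ∈ Set.Ioi (0:ℝ) :=
        eventually_mem_nhdsWithin
      filter_upwards [hev2, hmem] with δ h1 h2
      rw [heq δ]
      exact mul_pos (pow_pos h2 j0) h1
  obtain ⟨δ, hδ⟩ := hmain.exists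
  exact ⟨_, hδ⟩
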